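/- Let T ≥ 1 and let G₁, …, G_T > 0 be per-slot energy budgets. Then the infimum of ∑_{i=1}^{T} ∑_{l∈S} f_l(b_{l,i}) over all b : S × {1,…,T} → ℝ with b_{l,i} ≥ 0 and ∑_{i=1}^{k} ∑_{l∈S} b_{l,i} ≤ ∑_{i=1}^{k} G_i for every k ∈ {1,…,T}, equals the infimum of ∑_{i=1}^{T} x(s_i) over all s : {1,…,T} → ℝ with s_i ≥ 0 and ∑_{i=1}^{k} s_i ≤ ∑_{i=1}^{k} G_i for every k ∈ {1,…,T}. -/

import Mathlib

open BigOperators ENNReal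

/-- The per-link cost `f(b) = t / ((1/2)·ln(e^{2t} + b/σ) − t)` for `b > 0`, with the
convention that it is `+∞` when `b ≤ 0` (the denominator vanishes at `b = 0`). -/
noncomputable def fCost (t σ b : ℝ) : ℝ≥0∞ :=
  if 0 < b then
    ENNReal.ofReal (t / ((1 / 2) * Real.log (Real.exp (2 * t) + b / σ) - t))
  else ⊤

/-- The value function
`x(s) = inf { ∑_{l∈S} f_l(b_l) : b_l ≥ 0 for all l, ∑_{l∈S} b_l ≤ s }`,
with values in `[0, +∞]`. -/
noncomputable def xval (S : Type) [Fintype S] (t σ : S → ℝ) (s : ℝ) : ℝ≥0∞ :=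
  sInf { v : ℝ≥0∞ | ∃ b : S → ℝ,
    (∀ l, 0 ≤ b l) ∧ (∑ l, b l) ≤ s ∧ v = ∑ l, fCost (t l) (σ l) (b l) }

/-- For `T ≥ 1` and per-slot energy budgets `G₁, …, G_T > 0`, the
infimum of `∑_{i=1}^T ∑_{l∈S} f_l(b_{l,i})` over all `b ≥ 0` satisfying the
cumulative constraints `∑_{i≤k} ∑_l b_{l,i} ≤ ∑_{i≤k} G_i` for every `k`, equals the
infimum of `∑_{i=1}^T x(s_i)` over all `s ≥ 0` satisfying
`∑_{i≤k} s_i ≤ ∑_{i≤k} G_i` for every `k`. -/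
theorem multislot_reduction_to_value_function (S : Type) [Fintype S] [Nonempty S]
    (t σ : S → ℝ) (ht : ∀ l, 0 < t l) (hσ : ∀ l, 0 < σ l)
    (T : ℕ) (hT : 1 ≤ T) (G : Fin T → ℝ) (hG : ∀ i, 0 < G i) :
    sInf { v : ℝ≥0∞ | ∃ b : S → Fin T → ℝ,
        (∀ l i, 0 ≤ b l i) ∧
        (∀ k : Fin T, (∑ i ∈ Finset.Iic k, ∑ l, b l i) ≤ ∑ i ∈ Finset.Iic k, G i) ∧
        v = ∑ i, ∑ l, fCost (t l) (σ l) (b l i) } =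
    sInf { v : ℝ≥0∞ | ∃ s : Fin T → ℝ,
        (∀ i, 0 ≤ s i) ∧
        (∀ k : Fin T, (∑ i ∈ Finset.Iic k, s i) ≤ ∑ i ∈ Finset.Iic k, G i) ∧
        v = ∑ i, xval S t σ (s i) } := by
  apply le_antisymm
  · -- LHS ≤ RHS
    apply le_sInf
    rintro v ⟨s, hs0, hsG, rfl⟩
    apply ENNReal.le_of_forall_pos_le_add
    intro ε hε hfin
    have key : ∀ i : Fin T, ∃ b : S → ℝ, (∀ l, 0 ≤ b l) ∧ (∑ l, b l) ≤ s i ∧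
        (∑ l, fCost (t l) (σ l) (b l)) ≤ xval S t σ (s i) + (ε : ℝ≥0∞) / T := by
      intro i
      have hxi : xval S t σ (s i) < ⊤ :=
        lt_of_le_of_lt (Finset.single_le_sum (f := fun j => xval S t σ (s j)) (fun j _ => zero_le) (Finset.mem_univ i)) hfin
      have hlt : xval S t σ (s i) < xval S t σ (s i) + (ε : ℝ≥0∞) / T := by
        apply ENNReal.lt_add_right hxi.ne
        simp only [ne_eq, ENNReal.div_eq_zero_iff, ENNReal.coe_eq_zero, ENNReal.natCast_ne_top,
          or_false]
        exact fun h => absurd h hε.ne'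
      rw [xval] at hlt
      obtain ⟨w, ⟨b, hb0, hbs, rfl⟩, hwlt⟩ := sInf_lt_iff.mp hlt
      exact ⟨b, hb0, hbs, hwlt.le⟩
    choose b hb0 hbs hble using key
    have step : sInf { v : ℝ≥0∞ | ∃ b : S → Fin T → ℝ,
        (∀ l i, 0 ≤ b l i) ∧
        (∀ k : Fin T, (∑ i ∈ Finset.Iic k, ∑ l, b l i) ≤ ∑ i ∈ Finset.Iic k, G i) ∧
        v = ∑ i, ∑ l, fCost (t l) (σ l) (b l i) } ≤
        ∑ i, ∑ l, fCost (t l) (σ l) (b i l) := by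
      apply sInf_le
      refine ⟨fun l i => b i l, fun l i => hb0 i l, ?_, by rfl⟩
      intro k
      calc (∑ i ∈ Finset.Iic k, ∑ l, b i l) ≤ ∑ i ∈ Finset.Iic k, s i :=
            Finset.sum_le_sum (fun i _ => hbs i)
        _ ≤ ∑ i ∈ Finset.Iic k, G i := hsG k
    refine step.trans ?_
    calc (∑ i, ∑ l, fCost (t l) (σ l) (b i l))
        ≤ ∑ i, (xval S t σ (s i) + (ε : ℝ≥0∞) / T) := Finset.sum_le_sum (fun i _ => hble i)
      _ = (∑ i, xval S t σ (s i)) + ∑ _i : Fin T, (ε : ℝ≥0∞) / T := by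
          rw [Finset.sum_add_distrib]
      _ ≤ (∑ i, xval S t σ (s i)) + ε := by
          gcongr
          rw [Finset.sum_const, Finset.card_univ, Fintype.card_fin, nsmul_eq_mul]
          rw [ENNReal.mul_div_cancel]
          · exact Nat.cast_ne_zero.mpr (by omega)
          · exact ENNReal.natCast_ne_top T
  · -- RHS ≤ LHS
    apply le_sInf
    rintro v ⟨b, hb0, hbG, rfl⟩
    have hx : ∀ i, xval S t σ (∑ l, b l i) ≤ ∑ l, fCost (t l) (σ l) (b l i) := fun i =>
      sInf_le ⟨fun l => b l i, fun l => hb0 l i, le_refl _, rfl⟩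
    calc sInf { v : ℝ≥0∞ | ∃ s : Fin T → ℝ,
        (∀ i, 0 ≤ s i) ∧
        (∀ k : Fin T, (∑ i ∈ Finset.Iic k, s i) ≤ ∑ i ∈ Finset.Iic k, G i) ∧
        v = ∑ i, xval S t σ (s i) }
        ≤ ∑ i, xval S t σ (∑ l, b l i) :=
          sInf_le ⟨fun i => ∑ l, b l i,
            fun i => Finset.sum_nonneg (fun l _ => hb0 l i), hbG, rfl⟩
      _ ≤ ∑ i, ∑ l, fCost (t l) (σ l) (b l i) := Finset.sum_le_sum (fun i _ => hx i)
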